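/- Let M_k (k=1,…,K) be n×m_k matrices with entries in {0,1} such that in each column of each M_k the 1's occur in consecutive row positions, and let M_k' be n×m_k integer matrices with M_k' ≡ M_k (mod 2) entrywise. Set A_k := M_k M_k^T and A_k' := M_k' (M_k')^T. Then for all nonnegative reals t_1,…,t_K: det(t_1 A_1 + ⋯ + t_K A_K) ≤ det(t_1 A_1' + ⋯ + t_K A_K'). -/

import Mathlib

open scoped BigOperators
open Matrix


/-- number of ones -/
def onesCount {s : ℕ} (X : Matrix (Fin s) (Fin s) ℤ) : ℕ := ∑ i, ∑ j, (X i j).toNat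

theorem interval_det : ∀ (s : ℕ) (X : Matrix (Fin s) (Fin s) ℤ),
    (∀ i j, X i j = 0 ∨ X i j = 1) →
    (∀ j, ∀ i₁ i₂ i₃ : Fin s, i₁ ≤ i₂ → i₂ ≤ i₃ → X i₁ j = 1 → X i₃ j = 1 → X i₂ j = 1) →
    X.det = 0 ∨ X.det = 1 ∨ X.det = -1 := by
  intro s
  induction s with
  | zero => intro X _ _; right; left; exact Matrix.det_isEmpty
  | succ r IH =>
    suffices H : ∀ c (X : Matrix (Fin (r+1)) (Fin (r+1)) ℤ),
        onesCount X ≤ c →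
        (∀ i j, X i j = 0 ∨ X i j = 1) →
        (∀ j, ∀ i₁ i₂ i₃ : Fin (r+1), i₁ ≤ i₂ → i₂ ≤ i₃ → X i₁ j = 1 → X i₃ j = 1 → X i₂ j = 1) →
        X.det = 0 ∨ X.det = 1 ∨ X.det = -1 by
      intro X h01 hint; exact H (onesCount X) X le_rfl h01 hint
    intro c
    induction c with
    | zero =>
      intro X hc h01 _
      left
      apply Matrix.det_eq_zero_of_row_eq_zero 0
      intro j
      rcases h01 0 j with h | h
      · exact h
      · exfalso
        have h1 : (X 0 j).toNat ≤ 0 := by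
          calc (X 0 j).toNat ≤ ∑ j', (X 0 j').toNat := Finset.single_le_sum (f := fun j' => (X 0 j').toNat) (fun _ _ => Nat.zero_le _) (Finset.mem_univ j)
          _ ≤ ∑ i, ∑ j', (X i j').toNat := Finset.single_le_sum (f := fun i => ∑ j', (X i j').toNat) (fun _ _ => Nat.zero_le _) (Finset.mem_univ (0 : Fin (r+1)))
          _ ≤ 0 := hc
        rw [h] at h1; simp at h1
    | succ c ihc =>
      intro X hc h01 hint
      by_cases h0 : ∃ j, X 0 j = 1
      · obtain ⟨j₀, hj₀⟩ := h0
        by_cases h1 : ∃ j₁, j₁ ≠ j₀ ∧ X 0 j₁ = 1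
        · obtain ⟨j₁, hj₁ne, hj₁⟩ := h1
          -- comparability of the two columns
          have step : ∀ ja jb : Fin (r+1), ja ≠ jb → X 0 ja = 1 →
              (∀ i, X i ja = 1 → X i jb = 1) → X.det = 0 ∨ X.det = 1 ∨ X.det = -1 := by
            intro ja jb hne h0a hsub
            set X' := X.updateCol jb (fun i => X i jb + (-1 : ℤ) • X i ja) with hX'
            have hdet : X'.det = X.det :=
              Matrix.det_updateCol_add_smul_self X (Ne.symm hne) (-1)
            have hX'app : ∀ i j, X' i j = if j = jb then X i jb - X i ja else X i j := by
              intro i j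
              by_cases hj : j = jb
              · subst hj; simp [hX', Matrix.updateCol_self]; ring
              · simp [hX', Matrix.updateCol_ne hj, hj]
            -- 0/1 entries
            have h01' : ∀ i j, X' i j = 0 ∨ X' i j = 1 := by
              intro i j
              rw [hX'app]
              by_cases hj : j = jb
              · simp only [hj, if_pos rfl]
                rcases h01 i ja with ha | ha
                · rw [ha, sub_zero]; exact h01 i jb
                · left; rw [hsub i ha, ha]; norm_num
              · simp only [if_neg hj]; exact h01 i j
            -- downward closedness of column ja
            have hdown : ∀ i i' : Fin (r+1), i ≤ i' → X i' ja = 1 → X i ja = 1 := by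
              intro i i' hii hX1
              exact hint ja 0 i i' (Fin.zero_le i) hii h0a hX1
            have hone : ∀ i j, X' i j = 1 ↔ (if j = jb then X i jb = 1 ∧ X i ja = 0 else X i j = 1) := by
              intro i j
              rw [hX'app]
              by_cases hj : j = jb
              · simp only [hj, if_pos rfl]
                constructor
                · intro h
                  rcases h01 i ja with ha | ha
                  · rcases h01 i jb with hb | hb
                    · rw [ha, hb] at h; norm_num at h
                    · exact ⟨hb, ha⟩
                  · rw [hsub i ha, ha] at h; norm_num at h
                · rintro ⟨h1, h2⟩; rw [h1, h2]; norm_num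
              · simp only [if_neg hj]
            have hint' : ∀ j, ∀ i₁ i₂ i₃ : Fin (r+1), i₁ ≤ i₂ → i₂ ≤ i₃ →
                X' i₁ j = 1 → X' i₃ j = 1 → X' i₂ j = 1 := by
              intro j i₁ i₂ i₃ h12 h23 ha hb
              rw [hone] at ha hb ⊢
              by_cases hj : j = jb
              · rw [if_pos hj] at ha hb ⊢
                refine ⟨hint jb i₁ i₂ i₃ h12 h23 ha.1 hb.1, ?_⟩
                rcases h01 i₂ ja with h2 | h2
                · exact h2
                · exfalso
                  have := hdown i₁ i₂ h12 h2
                  rw [ha.2] at this; norm_num at this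
              · rw [if_neg hj] at ha hb ⊢
                exact hint j i₁ i₂ i₃ h12 h23 ha hb
            -- ones count strictly decreases
            have hones : onesCount X' < onesCount X := by
              have key : ∀ i j, (X' i j).toNat ≤ (X i j).toNat := by
                intro i j
                rw [hX'app]
                by_cases hj : j = jb
                · rw [if_pos hj, hj]
                  rcases h01 i ja with ha | ha
                  · rw [ha, sub_zero]
                  · rw [ha, hsub i ha]; simp
                · rw [if_neg hj]
              have keystrict : (X' 0 jb).toNat < (X 0 jb).toNat := by
                rw [hX'app, if_pos rfl, h0a, hsub 0 h0a]
                simp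
              unfold onesCount
              apply Finset.sum_lt_sum
              · intro i _
                exact Finset.sum_le_sum fun j _ => key i j
              · refine ⟨0, Finset.mem_univ 0, ?_⟩
                apply Finset.sum_lt_sum
                · intro j _; exact key 0 j
                · exact ⟨jb, Finset.mem_univ jb, keystrict⟩
            rw [← hdet]
            exact ihc X' (by omega) h01' hint'
          have comp : (∀ i, X i j₀ = 1 → X i j₁ = 1) ∨ (∀ i, X i j₁ = 1 → X i j₀ = 1) := by
            by_contra h
            push_neg at h
            obtain ⟨⟨a, ha1, ha2⟩, ⟨b, hb1, hb2⟩⟩ := h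
            rcases le_total a b with hab | hab
            · exact ha2 (hint j₁ 0 a b (Fin.zero_le a) hab hj₁ hb1)
            · exact hb2 (hint j₀ 0 b a (Fin.zero_le b) hab hj₀ ha1)
          rcases comp with hcomp | hcomp
          · exact step j₀ j₁ (Ne.symm hj₁ne) hj₀ hcomp
          · exact step j₁ j₀ hj₁ne hj₁ hcomp
        · -- exactly one 1 in row 0 : expand
          push_neg at h1
          have hrow : ∀ j, j ≠ j₀ → X 0 j = 0 := by
            intro j hj
            rcases h01 0 j with h | h
            · exact h
            · exact absurd h (h1 j hj)
          rw [Matrix.det_succ_row_zero]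
          rw [Finset.sum_eq_single j₀]
          · have hm := IH (X.submatrix Fin.succ j₀.succAbove)
              (fun i j => h01 _ _)
              (fun j i₁ i₂ i₃ h12 h23 ha hb =>
                hint (j₀.succAbove j) _ _ _ (Fin.succ_le_succ_iff.mpr h12) (Fin.succ_le_succ_iff.mpr h23) ha hb)
            rw [hj₀, mul_one]
            rcases Nat.even_or_odd (j₀ : ℕ) with hp | hp
            · rw [hp.neg_one_pow, one_mul]; exact hm
            · rw [hp.neg_one_pow, neg_one_mul]
              rcases hm with h | h | h
              · left; rw [h]; ring
              · right; right; rw [h]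
              · right; left; rw [h]; ring
          · intro j _ hj
            rw [hrow j hj]; ring
          · intro h; exact absurd (Finset.mem_univ j₀) h
      · push_neg at h0
        left
        apply Matrix.det_eq_zero_of_row_eq_zero 0
        intro j
        rcases h01 0 j with h | h
        · exact h
        · exact absurd h (h0 j)


theorem det_mul_expand {I : Type*} [Fintype I] [DecidableEq I] {n : ℕ}
    (A : Matrix (Fin n) I ℝ) (B : Matrix I (Fin n) ℝ) :
    (A * B).det = ∑ f : Fin n → I, (∏ i, A i (f i)) * (B.submatrix f id).det := by
  have h1 : A * B = Matrix.of fun i => ∑ p : I, A i p • B p := by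
    ext i j
    simp [Matrix.mul_apply]
  have h2 : (A * B).det = (Matrix.detRowAlternating (R := ℝ) (n := Fin n)).toMultilinearMap
      (fun i => ∑ p : I, A i p • B p) := by
    rw [h1]; rfl
  rw [h2, MultilinearMap.map_sum]
  refine Finset.sum_congr rfl fun f _ => ?_
  rw [MultilinearMap.map_smul_univ, smul_eq_mul]
  rfl

theorem det_mul_factorial {I : Type*} [Fintype I] [DecidableEq I] {n : ℕ}
    (A : Matrix (Fin n) I ℝ) (B : Matrix I (Fin n) ℝ) :
    (n.factorial : ℝ) * (A * B).det
      = ∑ f : Fin n → I, (A.submatrix id f).det * (B.submatrix f id).det := by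
  have key : ∀ σ : Equiv.Perm (Fin n),
      ∑ f : Fin n → I, (((Equiv.Perm.sign σ : ℤ) : ℝ) * ∏ i, A (σ i) (f i))
          * (B.submatrix f id).det = (A * B).det := by
    intro σ
    rw [det_mul_expand]
    rw [← Equiv.sum_comp (Equiv.arrowCongr σ.symm (Equiv.refl I))
      (fun f => (((Equiv.Perm.sign σ : ℤ) : ℝ) * ∏ i, A (σ i) (f i)) * (B.submatrix f id).det)]
    refine Finset.sum_congr rfl fun g _ => ?_
    have hcomp : (Equiv.arrowCongr σ.symm (Equiv.refl I)) g = g ∘ σ := by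
      ext i; simp [Equiv.arrowCongr]
    rw [hcomp]
    have hp2 : (∏ i, A (σ i) ((g ∘ σ) i)) = ∏ i, A i (g i) :=
      Equiv.prod_comp σ fun i => A i (g i)
    have hdetperm : (B.submatrix (g ∘ σ) id).det
        = ((Equiv.Perm.sign σ : ℤ) : ℝ) * (B.submatrix g id).det := by
      have h : B.submatrix (g ∘ σ) id = (B.submatrix g id).submatrix σ id := rfl
      rw [h, Matrix.det_permute]
    rw [hp2, hdetperm]
    have hsgn : ((Equiv.Perm.sign σ : ℤ) : ℝ) * ((Equiv.Perm.sign σ : ℤ) : ℝ) = 1 := by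
      rcases Int.units_eq_one_or (Equiv.Perm.sign σ) with h | h <;> rw [h] <;> norm_num
    have hre : (((Equiv.Perm.sign σ : ℤ) : ℝ) * ∏ i, A i (g i))
        * (((Equiv.Perm.sign σ : ℤ) : ℝ) * (B.submatrix g id).det)
        = (((Equiv.Perm.sign σ : ℤ) : ℝ) * ((Equiv.Perm.sign σ : ℤ) : ℝ))
          * ((∏ i, A i (g i)) * (B.submatrix g id).det) := by ring
    rw [hre, hsgn, one_mul]
  calc (n.factorial : ℝ) * (A * B).det
      = ∑ _σ : Equiv.Perm (Fin n), (A * B).det := by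
        rw [Finset.sum_const, Finset.card_univ, Fintype.card_perm, Fintype.card_fin, nsmul_eq_mul]
    _ = ∑ σ : Equiv.Perm (Fin n), ∑ f : Fin n → I,
          (((Equiv.Perm.sign σ : ℤ) : ℝ) * ∏ i, A (σ i) (f i)) * (B.submatrix f id).det := by
        refine Finset.sum_congr rfl fun σ _ => (key σ).symm
    _ = ∑ f : Fin n → I, (A.submatrix id f).det * (B.submatrix f id).det := by
        rw [Finset.sum_comm]
        refine Finset.sum_congr rfl fun f _ => ?_
        rw [← Finset.sum_mul]
        congr 1
        rw [Matrix.det_apply']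
        rfl


theorem det_sq_le {n : ℕ} (D D' : Matrix (Fin n) (Fin n) ℤ)
    (h01 : ∀ i j, D i j = 0 ∨ D i j = 1)
    (hint : ∀ j, ∀ i₁ i₂ i₃ : Fin n, i₁ ≤ i₂ → i₂ ≤ i₃ → D i₁ j = 1 → D i₃ j = 1 → D i₂ j = 1)
    (hmod : ∀ i j, D' i j ≡ D i j [ZMOD 2]) :
    D.det * D.det ≤ D'.det * D'.det := by
  have hmap : (D'.map ((↑) : ℤ → ZMod 2)) = D.map ((↑) : ℤ → ZMod 2) := by
    ext i j
    simp only [Matrix.map_apply]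
    exact (ZMod.intCast_eq_intCast_iff _ _ _).mpr (hmod i j)
  have hdet2 : ((D'.det : ZMod 2)) = (D.det : ZMod 2) := by
    have h1 := RingHom.map_det (Int.castRingHom (ZMod 2)) D
    have h2 := RingHom.map_det (Int.castRingHom (ZMod 2)) D'
    simp only [Int.coe_castRingHom, RingHom.mapMatrix_apply] at h1 h2
    rw [h1, h2, hmap]
  rcases interval_det n D h01 hint with h | h | h
  · rw [h]; simp [mul_self_nonneg]
  · rw [h]
    have hne : D'.det ≠ 0 := by
      intro h0
      rw [h, h0] at hdet2
      norm_num at hdet2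
    have : 1 ≤ D'.det * D'.det := by
      rcases hne.lt_or_gt with hlt | hlt <;> nlinarith
    linarith
  · rw [h]
    have hne : D'.det ≠ 0 := by
      intro h0
      rw [h, h0] at hdet2
      norm_num at hdet2
    have : 1 ≤ D'.det * D'.det := by
      rcases hne.lt_or_gt with hlt | hlt <;> nlinarith
    linarith


theorem stmt4 (K n : ℕ) (hK : 0 < K) (hn : 0 < n) (m : Fin K → ℕ)
    (M M' : ∀ k : Fin K, Matrix (Fin n) (Fin (m k)) ℤ)
    (h01 : ∀ k i j, M k i j = 0 ∨ M k i j = 1)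
    (hint : ∀ k j, ∀ i₁ i₂ i₃ : Fin n, i₁ ≤ i₂ → i₂ ≤ i₃ →
      M k i₁ j = 1 → M k i₃ j = 1 → M k i₂ j = 1)
    (hmod : ∀ k i j, M' k i j ≡ M k i j [ZMOD 2])
    (t : Fin K → ℝ) (ht : ∀ k, 0 ≤ t k) :
    (∑ k, t k • ((M k * (M k)ᵀ).map ((↑) : ℤ → ℝ))).det ≤
      (∑ k, t k • ((M' k * (M' k)ᵀ).map ((↑) : ℤ → ℝ))).det := by
  set I := (k : Fin K) × Fin (m k) with hI
  set B : Matrix (Fin n) I ℝ :=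
    Matrix.of fun i p => Real.sqrt (t p.1) * ((M p.1 i p.2 : ℤ) : ℝ) with hB
  set B' : Matrix (Fin n) I ℝ :=
    Matrix.of fun i p => Real.sqrt (t p.1) * ((M' p.1 i p.2 : ℤ) : ℝ) with hB'
  have gram : ∀ (N : ∀ k : Fin K, Matrix (Fin n) (Fin (m k)) ℤ),
      (∑ k, t k • ((N k * (N k)ᵀ).map ((↑) : ℤ → ℝ)))
        = (Matrix.of fun i (p : I) => Real.sqrt (t p.1) * ((N p.1 i p.2 : ℤ) : ℝ))
          * (Matrix.of fun i (p : I) => Real.sqrt (t p.1) * ((N p.1 i p.2 : ℤ) : ℝ))ᵀ := by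
    intro N
    ext i j
    simp only [Matrix.sum_apply, Matrix.smul_apply, Matrix.map_apply, Matrix.mul_apply,
      Matrix.transpose_apply, smul_eq_mul, Matrix.of_apply]
    rw [← Finset.univ_sigma_univ, Finset.sum_sigma]
    refine Finset.sum_congr rfl fun k _ => ?_
    push_cast
    rw [Finset.mul_sum]
    refine Finset.sum_congr rfl fun c _ => ?_
    have hs : Real.sqrt (t k) * Real.sqrt (t k) = t k := Real.mul_self_sqrt (ht k)
    conv_lhs => rw [← hs]
    ring
  rw [gram M, gram M']
  have hfac : (0 : ℝ) < (n.factorial : ℝ) := by positivity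
  rw [← mul_le_mul_iff_right₀ hfac]
  rw [det_mul_factorial B Bᵀ, det_mul_factorial B' B'ᵀ]
  apply Finset.sum_le_sum
  intro f _
  have htr : ∀ (C : Matrix (Fin n) I ℝ), (Cᵀ).submatrix f id = (C.submatrix id f)ᵀ :=
    fun C => rfl
  rw [htr B, htr B', Matrix.det_transpose, Matrix.det_transpose]
  set D : Matrix (Fin n) (Fin n) ℤ := Matrix.of fun i j => M (f j).1 i (f j).2 with hD
  set D' : Matrix (Fin n) (Fin n) ℤ := Matrix.of fun i j => M' (f j).1 i (f j).2 with hD'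
  have hcol : ∀ (N : ∀ k : Fin K, Matrix (Fin n) (Fin (m k)) ℤ),
      ((Matrix.of fun i (p : I) => Real.sqrt (t p.1) * ((N p.1 i p.2 : ℤ) : ℝ)).submatrix id f).det
        = (∏ j, Real.sqrt (t (f j).1)) *
          (((Matrix.of fun i j => N (f j).1 i (f j).2 : Matrix (Fin n) (Fin n) ℤ).det : ℤ) : ℝ) := by
    intro N
    have h1 : ((Matrix.of fun i (p : I) => Real.sqrt (t p.1) * ((N p.1 i p.2 : ℤ) : ℝ)).submatrix id f)
        = Matrix.of fun i j => Real.sqrt (t (f j).1) *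
            (((Matrix.of fun i j => N (f j).1 i (f j).2 : Matrix (Fin n) (Fin n) ℤ)).map ((↑) : ℤ → ℝ)) i j := rfl
    rw [h1, Matrix.det_mul_row]
    congr 1
    have h2 := RingHom.map_det (Int.castRingHom ℝ)
      (Matrix.of fun i j => N (f j).1 i (f j).2 : Matrix (Fin n) (Fin n) ℤ)
    simp only [Int.coe_castRingHom, RingHom.mapMatrix_apply] at h2
    exact h2.symm
  rw [hcol M, hcol M']
  rw [← hD, ← hD']
  set P : ℝ := ∏ j, Real.sqrt (t (f j).1) with hP
  have hPP : P * P = ∏ j, t (f j).1 := by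
    rw [hP, ← Finset.prod_mul_distrib]
    exact Finset.prod_congr rfl fun j _ => Real.mul_self_sqrt (ht _)
  have hint2 : D.det * D.det ≤ D'.det * D'.det := by
    apply det_sq_le
    · intro i j; exact h01 (f j).1 i (f j).2
    · intro j i₁ i₂ i₃ h12 h23 ha hb
      exact hint (f j).1 (f j).2 i₁ i₂ i₃ h12 h23 ha hb
    · intro i j; exact hmod (f j).1 i (f j).2
  have hintR : ((D.det : ℝ)) * (D.det : ℝ) ≤ (D'.det : ℝ) * (D'.det : ℝ) := by
    have : ((D.det * D.det : ℤ) : ℝ) ≤ ((D'.det * D'.det : ℤ) : ℝ) := Int.cast_le.mpr hint2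
    rw [Int.cast_mul, Int.cast_mul] at this
    exact this
  calc (P * (D.det : ℝ)) * (P * (D.det : ℝ))
      = (P * P) * ((D.det : ℝ) * (D.det : ℝ)) := by ring
    _ ≤ (P * P) * ((D'.det : ℝ) * (D'.det : ℝ)) :=
        mul_le_mul_of_nonneg_left hintR (mul_self_nonneg P)
    _ = (P * (D'.det : ℝ)) * (P * (D'.det : ℝ)) := by ring
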